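/- arXiv:1802.03733 — 2 statements merged into one kernel-verified Lean document; each statement's English description precedes it below -/
import Mathlib

section
/- Let X be a Banach space, and for p = 1, 2, 3 let T_p : X^p → X be a bounded p-linear map. Suppose there exists η ∈ (0, 1/4) with ‖T_1‖ ≤ η, and let r > 0 satisfy r < min{1/(8‖T_2‖), 1/(4√‖T_3‖)}. Then for every y ∈ X with ‖y‖ < r/4 there exists a unique x ∈ X with ‖x‖ < r such that x = y + T_1(x) + T_2(x,x) + T_3(x,x,x). -/
set_option maxHeartbeats 1000000 in
/-- Cubic fixed point proposition in a Banach space.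
`T1, T2, T3` are bounded 1-, 2-, 3-linear maps.
The conditions `8‖T2‖r < 1` and `16‖T3‖r² < 1` are the (equivalent, multiplied-out)
forms of `r < min{1/(8‖T2‖), 1/(4√‖T3‖)}` for `r > 0`. -/
theorem cubic_fixed_point {X : Type*} [NormedAddCommGroup X] [NormedSpace ℝ X]
    [CompleteSpace X]
    (T1 : X [×1]→L[ℝ] X) (T2 : X [×2]→L[ℝ] X) (T3 : X [×3]→L[ℝ] X)
    (η : ℝ) (hη0 : 0 < η) (hη : η < 1/4) (hT1 : ‖T1‖ ≤ η)
    (r : ℝ) (hr0 : 0 < r) (hr2 : 8 * ‖T2‖ * r < 1) (hr3 : 16 * ‖T3‖ * r ^ 2 < 1)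
    (y : X) (hy : ‖y‖ < r / 4) :
    ∃! x : X, ‖x‖ < r ∧ x = y + T1 ![x] + T2 ![x, x] + T3 ![x, x, x] := by
  have hT2 : 0 ≤ ‖T2‖ := norm_nonneg _
  have hT3 : 0 ≤ ‖T3‖ := norm_nonneg _
  set F : X → X := fun x => y + T1 ![x] + T2 ![x, x] + T3 ![x, x, x] with hF
  -- norms of constant tuples
  have pi1 : ∀ x : X, ‖(![x] : Fin 1 → X)‖ ≤ ‖x‖ := by
    intro x
    rw [pi_norm_le_iff_of_nonneg (norm_nonneg _)]
    intro i; fin_cases i <;> simp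
  have pi2 : ∀ x : X, ‖(![x, x] : Fin 2 → X)‖ ≤ ‖x‖ := by
    intro x
    rw [pi_norm_le_iff_of_nonneg (norm_nonneg _)]
    intro i; fin_cases i <;> simp
  have pi3 : ∀ x : X, ‖(![x, x, x] : Fin 3 → X)‖ ≤ ‖x‖ := by
    intro x
    rw [pi_norm_le_iff_of_nonneg (norm_nonneg _)]
    intro i; fin_cases i <;> simp
  have pid1 : ∀ x x' : X, ‖(![x] - ![x'] : Fin 1 → X)‖ ≤ ‖x - x'‖ := by
    intro x x'
    rw [pi_norm_le_iff_of_nonneg (norm_nonneg _)]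
    intro i; fin_cases i <;> simp [Pi.sub_apply]
  have pid2 : ∀ x x' : X, ‖(![x, x] - ![x', x'] : Fin 2 → X)‖ ≤ ‖x - x'‖ := by
    intro x x'
    rw [pi_norm_le_iff_of_nonneg (norm_nonneg _)]
    intro i; fin_cases i <;> simp [Pi.sub_apply]
  have pid3 : ∀ x x' : X, ‖(![x, x, x] - ![x', x', x'] : Fin 3 → X)‖ ≤ ‖x - x'‖ := by
    intro x x'
    rw [pi_norm_le_iff_of_nonneg (norm_nonneg _)]
    intro i; fin_cases i <;> simp [Pi.sub_apply]
  -- bound: F maps closed ball r into the open ball r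
  have hmap : ∀ x : X, ‖x‖ ≤ r → ‖F x‖ < r := by
    intro x hx
    have h1 : ‖T1 ![x]‖ ≤ η * r := by
      calc ‖T1 ![x]‖ ≤ ‖T1‖ * ∏ i, ‖(![x] : Fin 1 → X) i‖ := T1.le_opNorm _
        _ = ‖T1‖ * ‖x‖ := by simp
        _ ≤ η * r := mul_le_mul hT1 hx (norm_nonneg _) hη0.le
    have h2 : ‖T2 ![x, x]‖ ≤ ‖T2‖ * r ^ 2 := by
      calc ‖T2 ![x, x]‖ ≤ ‖T2‖ * ∏ i, ‖(![x, x] : Fin 2 → X) i‖ := T2.le_opNorm _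
        _ = ‖T2‖ * (‖x‖ * ‖x‖) := by simp [Fin.prod_univ_two]
        _ ≤ ‖T2‖ * r ^ 2 := by
            rw [sq]
            exact mul_le_mul_of_nonneg_left
              (mul_le_mul hx hx (norm_nonneg _) hr0.le) hT2
    have h3 : ‖T3 ![x, x, x]‖ ≤ ‖T3‖ * r ^ 3 := by
      calc ‖T3 ![x, x, x]‖ ≤ ‖T3‖ * ∏ i, ‖(![x, x, x] : Fin 3 → X) i‖ := T3.le_opNorm _
        _ = ‖T3‖ * (‖x‖ * ‖x‖ * ‖x‖) := by simp [Fin.prod_univ_three]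
        _ ≤ ‖T3‖ * r ^ 3 := by
            have hxn : 0 ≤ ‖x‖ := norm_nonneg _
            have : ‖x‖ * ‖x‖ * ‖x‖ ≤ r ^ 3 := by
              rw [pow_succ, sq]
              exact mul_le_mul (mul_le_mul hx hx hxn hr0.le) hx hxn
                (by positivity)
            exact mul_le_mul_of_nonneg_left this hT3
    have hηr : η * r < r / 4 * 1 := by nlinarith
    have h2' : ‖T2‖ * r ^ 2 < r / 8 := by nlinarith
    have h3' : ‖T3‖ * r ^ 3 < r / 16 := by nlinarith
    calc ‖F x‖ ≤ ‖y‖ + ‖T1 ![x]‖ + ‖T2 ![x, x]‖ + ‖T3 ![x, x, x]‖ := by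
          simp only [hF]
          exact le_trans (norm_add_le _ _) (add_le_add_left
            (le_trans (norm_add_le _ _) (add_le_add_left (norm_add_le _ _) _)) _)
      _ < r / 4 + r / 4 + r / 8 + r / 16 := by
          have := lt_of_le_of_lt h1 (by nlinarith : η * r < r / 4)
          have := lt_of_le_of_lt h2 h2'
          have := lt_of_le_of_lt h3 h3'
          linarith
      _ ≤ r := by linarith
  -- Lipschitz bound on the ball
  have hlip : ∀ x x' : X, ‖x‖ ≤ r → ‖x'‖ ≤ r →
      ‖F x - F x'‖ ≤ 11 / 16 * ‖x - x'‖ := by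
    intro x x' hx hx'
    have hd : 0 ≤ ‖x - x'‖ := norm_nonneg _
    have e1 : ‖T1 ![x] - T1 ![x']‖ ≤ η * ‖x - x'‖ := by
      have := T1.norm_image_sub_le ![x] ![x']
      simp only [Fintype.card_fin, Nat.cast_one, pow_zero, mul_one] at this
      calc ‖T1 ![x] - T1 ![x']‖ ≤ ‖T1‖ * 1 * ‖(![x] - ![x'] : Fin 1 → X)‖ := this
        _ ≤ η * ‖x - x'‖ := by
            rw [mul_one]
            exact mul_le_mul hT1 (pid1 x x') (norm_nonneg _) hη0.le
    have hmax2 : (‖(![x, x] : Fin 2 → X)‖ ⊔ ‖(![x', x'] : Fin 2 → X)‖) ≤ r :=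
      sup_le ((pi2 x).trans hx) ((pi2 x').trans hx')
    have hmax3 : (‖(![x, x, x] : Fin 3 → X)‖ ⊔ ‖(![x', x', x'] : Fin 3 → X)‖) ≤ r :=
      sup_le ((pi3 x).trans hx) ((pi3 x').trans hx')
    have hmaxnn2 : 0 ≤ (‖(![x, x] : Fin 2 → X)‖ ⊔ ‖(![x', x'] : Fin 2 → X)‖) :=
      le_sup_of_le_left (norm_nonneg _)
    have hmaxnn3 : 0 ≤ (‖(![x, x, x] : Fin 3 → X)‖ ⊔ ‖(![x', x', x'] : Fin 3 → X)‖) :=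
      le_sup_of_le_left (norm_nonneg _)
    have e2 : ‖T2 ![x, x] - T2 ![x', x']‖ ≤ ‖T2‖ * 2 * r * ‖x - x'‖ := by
      have h := T2.norm_image_sub_le ![x, x] ![x', x']
      simp only [Fintype.card_fin, Nat.cast_ofNat, pow_one] at h
      refine h.trans ?_
      have : ‖T2‖ * 2 * (‖(![x, x] : Fin 2 → X)‖ ⊔ ‖(![x', x'] : Fin 2 → X)‖) ^ (2 - 1)
          ≤ ‖T2‖ * 2 * r := by
        simpa using mul_le_mul_of_nonneg_left hmax2 (by positivity : (0:ℝ) ≤ ‖T2‖ * 2)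
      exact mul_le_mul this (pid2 x x') (norm_nonneg _) (by positivity)
    have e3 : ‖T3 ![x, x, x] - T3 ![x', x', x']‖ ≤ ‖T3‖ * 3 * r ^ 2 * ‖x - x'‖ := by
      have h := T3.norm_image_sub_le ![x, x, x] ![x', x', x']
      simp only [Fintype.card_fin, Nat.cast_ofNat] at h
      refine h.trans ?_
      have hp : (‖(![x, x, x] : Fin 3 → X)‖ ⊔ ‖(![x', x', x'] : Fin 3 → X)‖) ^ 2 ≤ r ^ 2 :=
        pow_le_pow_left₀ hmaxnn3 hmax3 2
      have : ‖T3‖ * 3 * (‖(![x, x, x] : Fin 3 → X)‖ ⊔ ‖(![x', x', x'] : Fin 3 → X)‖) ^ (3 - 1)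
          ≤ ‖T3‖ * 3 * r ^ 2 := by
        simpa using mul_le_mul_of_nonneg_left hp (by positivity : (0:ℝ) ≤ ‖T3‖ * 3)
      exact mul_le_mul this (pid3 x x') (norm_nonneg _) (by positivity)
    have hc1 : η ≤ 1 / 4 := hη.le
    have hc2 : ‖T2‖ * 2 * r ≤ 1 / 4 := by nlinarith
    have hc3 : ‖T3‖ * 3 * r ^ 2 ≤ 3 / 16 := by nlinarith
    calc ‖F x - F x'‖
        = ‖(T1 ![x] - T1 ![x']) + (T2 ![x, x] - T2 ![x', x'])
            + (T3 ![x, x, x] - T3 ![x', x', x'])‖ := by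
          simp only [hF]; congr 1; abel
      _ ≤ ‖T1 ![x] - T1 ![x']‖ + ‖T2 ![x, x] - T2 ![x', x']‖
            + ‖T3 ![x, x, x] - T3 ![x', x', x']‖ :=
          le_trans (norm_add_le _ _) (add_le_add_left (norm_add_le _ _) _)
      _ ≤ η * ‖x - x'‖ + ‖T2‖ * 2 * r * ‖x - x'‖ + ‖T3‖ * 3 * r ^ 2 * ‖x - x'‖ := by
          linarith
      _ = (η + ‖T2‖ * 2 * r + ‖T3‖ * 3 * r ^ 2) * ‖x - x'‖ := by ring
      _ ≤ 11 / 16 * ‖x - x'‖ := mul_le_mul_of_nonneg_right (by linarith) hd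
  -- set up the contraction on the closed ball
  set s : Set X := Metric.closedBall (0 : X) r with hs
  haveI : CompleteSpace s := Metric.isClosed_closedBall.completeSpace_coe
  haveI : Nonempty s := ⟨⟨0, Metric.mem_closedBall_self hr0.le⟩⟩
  have hmem : ∀ z : s, ‖(z : X)‖ ≤ r := by
    intro z
    exact mem_closedBall_zero_iff.mp z.2
  set g : s → s := fun z => ⟨F z, by
    simp only [hs, Metric.mem_closedBall, dist_zero_right]
    exact (hmap z (hmem z)).le⟩ with hg
  have hK : (⟨11 / 16, by norm_num⟩ : NNReal) < 1 := by
    exact (by norm_num : (11 / 16 : ℝ) < 1)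
  have hcontract : ContractingWith ⟨11 / 16, by norm_num⟩ g := by
    refine ⟨hK, LipschitzWith.of_dist_le_mul fun a b => ?_⟩
    rw [Subtype.dist_eq, Subtype.dist_eq, dist_eq_norm, dist_eq_norm]
    exact hlip a b (hmem a) (hmem b)
  set x : s := hcontract.fixedPoint g
  have hfix : g x = x := hcontract.fixedPoint_isFixedPt
  have hfix' : F (x : X) = (x : X) := congrArg Subtype.val hfix
  have hxr : ‖(x : X)‖ < r := by
    rw [← hfix']; exact hmap _ (hmem x)
  refine ⟨(x : X), ⟨hxr, hfix'.symm⟩, ?_⟩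
  rintro x' ⟨hx'r, hx'eq⟩
  have heq : ‖x' - (x : X)‖ ≤ 11 / 16 * ‖x' - (x : X)‖ := by
    calc ‖x' - (x : X)‖ = ‖F x' - F (x : X)‖ := by
          rw [hfix']; simp only [hF]; rw [← hx'eq]
      _ ≤ 11 / 16 * ‖x' - (x : X)‖ := hlip _ _ hx'r.le (hmem x)
  have : ‖x' - (x : X)‖ ≤ 0 := by linarith
  have : x' - (x : X) = 0 := norm_le_zero_iff.mp this
  exact sub_eq_zero.mp this
end

section
/- Let 1 ≤ p ≤ p' and let (X_1, μ_1), (X_2, μ_2) be σ-finite measure spaces. If f : X_1 × X_2 → ℝ belongs to L^p(X_1; L^{p'}(X_2)), then f ∈ L^{p'}(X_2; L^p(X_1)) and ‖f‖_{L^{p'}(X_2; L^p(X_1))} ≤ ‖f‖_{L^p(X_1; L^{p'}(X_2))}. -/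
open MeasureTheory

open Function
open scoped ENNReal NNReal


section aux

variable {α β : Type*} [MeasurableSpace α] [MeasurableSpace β]

private lemma iSup_rpow_aux (h : ℕ → ℝ≥0∞) {s : ℝ} (hs : 0 < s) :
    (⨆ n, h n) ^ s = ⨆ n, h n ^ s := by
  have := (ENNReal.orderIsoRpow s hs).map_iSup h
  simp only [ENNReal.orderIsoRpow_apply] at this
  exact this

private lemma rpow_split {s : ℝ} (hs1 : (0:ℝ) < s - 1) (x : ℝ≥0∞) :
    x ^ s = x ^ (s-1) * x := by
  calc x ^ s = x ^ (s - 1 + 1) := by norm_num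
    _ = x ^ (s-1) * x ^ (1:ℝ) := ENNReal.rpow_add_of_nonneg _ _ hs1.le zero_le_one
    _ = x ^ (s-1) * x := by rw [ENNReal.rpow_one]

/-- Minkowski's integral inequality, finite case. -/
private lemma minkowski_fin (μ : Measure α) (ν : Measure β) [SFinite μ] [SFinite ν]
    {s : ℝ} (hs : 1 < s) (g : α → β → ℝ≥0∞) (hg : Measurable (uncurry g))
    (hA : (∫⁻ y, (∫⁻ x, g x y ∂μ) ^ s ∂ν) ≠ ⊤) :
    (∫⁻ y, (∫⁻ x, g x y ∂μ) ^ s ∂ν) ^ (1/s) ≤ ∫⁻ x, (∫⁻ y, g x y ^ s ∂ν) ^ (1/s) ∂μ := by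
  have hs0 : (0:ℝ) < s := one_pos.trans hs
  have hs1 : (0:ℝ) < s - 1 := by linarith
  set I : β → ℝ≥0∞ := fun y => ∫⁻ x, g x y ∂μ with hIdef
  have hImeas : Measurable I := hg.lintegral_prod_left'
  set A := ∫⁻ y, I y ^ s ∂ν with hAdef
  set R := ∫⁻ x, (∫⁻ y, g x y ^ s ∂ν) ^ (1/s) ∂μ with hRdef
  rcases eq_or_ne A 0 with h0 | h0
  · rw [h0, ENNReal.zero_rpow_of_pos (by positivity)]; exact zero_le
  have hconj : (s/(s-1)).HolderConjugate s := (Real.HolderConjugate.conjExponent hs).symm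
  have hmeas2 : Measurable (fun q : α × β => I q.2 ^ (s-1) * g q.1 q.2) :=
    ((hImeas.comp measurable_snd).pow_const _).mul hg
  have hmel : Measurable fun x => (∫⁻ y, g x y ^ s ∂ν) ^ (1/s) :=
    ((hg.pow_const s).lintegral_prod_right').pow_const _
  have key : A ≤ A ^ ((s-1)/s) * R := by
    have step1 : A = ∫⁻ x, ∫⁻ y, I y ^ (s-1) * g x y ∂ν ∂μ := by
      rw [lintegral_lintegral_swap hmeas2.aemeasurable]
      refine lintegral_congr fun y => ?_
      have hgy : Measurable fun x => g x y := hg.comp measurable_prodMk_right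
      rw [lintegral_const_mul _ hgy]
      exact rpow_split hs1 (I y)
    have step2 : ∀ x, (∫⁻ y, I y ^ (s-1) * g x y ∂ν)
        ≤ A ^ ((s-1)/s) * (∫⁻ y, g x y ^ s ∂ν) ^ (1/s) := by
      intro x
      have hgx : Measurable fun y => g x y := hg.comp measurable_prodMk_left
      have h := ENNReal.lintegral_mul_le_Lp_mul_Lq ν hconj
        ((hImeas.pow_const (s-1)).aemeasurable) hgx.aemeasurable
      have e1 : (∫⁻ y, (I y ^ (s-1)) ^ (s/(s-1)) ∂ν) = A := by
        refine lintegral_congr fun y => ?_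
        rw [← ENNReal.rpow_mul]
        congr 1
        field_simp
      have e2 : (1 : ℝ) / (s/(s-1)) = (s-1)/s := by field_simp
      calc (∫⁻ y, I y ^ (s-1) * g x y ∂ν)
          ≤ (∫⁻ y, (I y ^ (s-1)) ^ (s/(s-1)) ∂ν) ^ (1/(s/(s-1)))
            * (∫⁻ y, g x y ^ s ∂ν) ^ (1/s) := h
        _ = A ^ ((s-1)/s) * (∫⁻ y, g x y ^ s ∂ν) ^ (1/s) := by rw [e1, e2]
    calc A = ∫⁻ x, ∫⁻ y, I y ^ (s-1) * g x y ∂ν ∂μ := step1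
      _ ≤ ∫⁻ x, A ^ ((s-1)/s) * (∫⁻ y, g x y ^ s ∂ν) ^ (1/s) ∂μ := lintegral_mono step2
      _ = A ^ ((s-1)/s) * R := by rw [lintegral_const_mul _ hmel, hRdef]
  have hBne : A ^ ((s-1)/s) ≠ 0 := by
    simp [ENNReal.rpow_eq_zero_iff, h0, hA, div_pos hs1 hs0]
  have hBtop : A ^ ((s-1)/s) ≠ ⊤ := ENNReal.rpow_ne_top_of_nonneg (by positivity) hA
  have hEq : A ^ (1/s) = A * (A ^ ((s-1)/s))⁻¹ := by
    calc A ^ (1/s) = A ^ (1 + -((s-1)/s)) := by congr 1; field_simp; ring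
      _ = A ^ (1:ℝ) * A ^ (-((s-1)/s)) := ENNReal.rpow_add _ _ h0 hA
      _ = A * (A ^ ((s-1)/s))⁻¹ := by rw [ENNReal.rpow_one, ENNReal.rpow_neg]
  calc A ^ (1/s) = A * (A ^ ((s-1)/s))⁻¹ := hEq
    _ ≤ (A ^ ((s-1)/s) * R) * (A ^ ((s-1)/s))⁻¹ := mul_le_mul_left key _
    _ = R * (A ^ ((s-1)/s) * (A ^ ((s-1)/s))⁻¹) := by ring
    _ = R := by rw [ENNReal.mul_inv_cancel hBne hBtop, mul_one]

end aux

section trunc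

variable {α β : Type*} [MeasurableSpace α] [MeasurableSpace β]

private lemma indicator_one_le {γ : Type*} (S : Set γ) (z : γ) :
    S.indicator (fun _ => (1:ℝ≥0∞)) z ≤ 1 := by
  classical
  by_cases h : z ∈ S <;> simp [h]

private lemma ennreal_iSup_min_natCast (x : ℝ≥0∞) : (⨆ n : ℕ, min x n) = x := by
  have : (⨆ n : ℕ, min x n) = min x (⨆ n : ℕ, (n : ℝ≥0∞)) := (inf_iSup_eq x _).symm
  rw [this, ENNReal.iSup_natCast, inf_top_eq]

/-- Minkowski's integral inequality for `ℝ≥0∞`-valued functions. -/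
private lemma minkowski_int (μ : Measure α) (ν : Measure β) [SigmaFinite μ] [SigmaFinite ν]
    {s : ℝ} (hs : 1 ≤ s) (g : α → β → ℝ≥0∞) (hg : Measurable (uncurry g)) :
    (∫⁻ y, (∫⁻ x, g x y ∂μ) ^ s ∂ν) ^ (1/s) ≤ ∫⁻ x, (∫⁻ y, g x y ^ s ∂ν) ^ (1/s) ∂μ := by
  rcases hs.eq_or_lt with h1 | hs
  · subst h1
    norm_num
    exact le_of_eq (lintegral_lintegral_swap hg.aemeasurable).symm
  have hs0 : (0:ℝ) < s := one_pos.trans hs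
  -- truncations
  set T : ℕ → α → β → ℝ≥0∞ := fun n x y =>
    (spanningSets μ n).indicator (fun _ => 1) x *
      ((spanningSets ν n).indicator (fun _ => 1) y * min (g x y) n) with hTdef
  have hTmeas : ∀ n, Measurable (uncurry (T n)) := fun n =>
    ((measurable_const.indicator (measurableSet_spanningSets μ n)).comp measurable_fst).mul
      (((measurable_const.indicator (measurableSet_spanningSets ν n)).comp measurable_snd).mul
        (hg.min measurable_const))
  have hTmono : ∀ x y, Monotone fun n => T n x y := by
    intro x y n m hnm
    exact mul_le_mul'
      (Set.indicator_le_indicator_of_subset (monotone_spanningSets μ hnm) (fun _ => zero_le) x)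
      (mul_le_mul'
        (Set.indicator_le_indicator_of_subset (monotone_spanningSets ν hnm) (fun _ => zero_le) y)
        (min_le_min le_rfl (by exact_mod_cast Nat.cast_le.mpr hnm)))
  have hTle : ∀ n x y, T n x y ≤ g x y := by
    intro n x y
    have h1 : (spanningSets μ n).indicator (fun _ => (1:ℝ≥0∞)) x ≤ 1 := indicator_one_le _ x
    have h2 : (spanningSets ν n).indicator (fun _ => (1:ℝ≥0∞)) y ≤ 1 := indicator_one_le _ y
    calc T n x y ≤ 1 * (1 * min (g x y) n) :=
          mul_le_mul' h1 (mul_le_mul' h2 (le_refl _))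
      _ ≤ g x y := by simpa using min_le_left _ _
  have hTsup : ∀ x y, (⨆ n, T n x y) = g x y := by
    intro x y
    obtain ⟨Nx, hNx⟩ : ∃ n, x ∈ spanningSets μ n := by
      have : x ∈ ⋃ n, spanningSets μ n := by rw [iUnion_spanningSets]; trivial
      exact Set.mem_iUnion.mp this
    obtain ⟨Ny, hNy⟩ : ∃ n, y ∈ spanningSets ν n := by
      have : y ∈ ⋃ n, spanningSets ν n := by rw [iUnion_spanningSets]; trivial
      exact Set.mem_iUnion.mp this
    refine le_antisymm (iSup_le fun n => hTle n x y) ?_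
    conv_lhs => rw [← ennreal_iSup_min_natCast (g x y)]
    refine iSup_le fun k => le_iSup_of_le (max k (max Nx Ny)) ?_
    set m := max k (max Nx Ny)
    have hxm : x ∈ spanningSets μ m :=
      monotone_spanningSets μ (le_trans (le_max_left _ _) (le_max_right k _)) hNx
    have hym : y ∈ spanningSets ν m :=
      monotone_spanningSets ν (le_trans (le_max_right _ _) (le_max_right k _)) hNy
    have : T m x y = min (g x y) m := by
      rw [hTdef]
      simp [Set.indicator_of_mem hxm, Set.indicator_of_mem hym]
    rw [this]
    exact min_le_min le_rfl (by exact_mod_cast Nat.cast_le.mpr (le_max_left k _))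
  set In : ℕ → β → ℝ≥0∞ := fun n y => ∫⁻ x, T n x y ∂μ with hIndef
  have hInmeas : ∀ n, Measurable (In n) := fun n => (hTmeas n).lintegral_prod_left'
  have hInmono : Monotone In := fun n m hnm y => lintegral_mono fun x => hTmono x y hnm
  have hI : ∀ y, (∫⁻ x, g x y ∂μ) = ⨆ n, In n y := by
    intro y
    calc (∫⁻ x, g x y ∂μ) = ∫⁻ x, ⨆ n, T n x y ∂μ := lintegral_congr fun x => (hTsup x y).symm
      _ = ⨆ n, In n y := lintegral_iSup (fun n => (hTmeas n).comp measurable_prodMk_right)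
            (fun n m h x => hTmono x y h)
  have hA : (∫⁻ y, (∫⁻ x, g x y ∂μ) ^ s ∂ν) = ⨆ n, ∫⁻ y, In n y ^ s ∂ν := by
    calc (∫⁻ y, (∫⁻ x, g x y ∂μ) ^ s ∂ν) = ∫⁻ y, ⨆ n, In n y ^ s ∂ν := by
          refine lintegral_congr fun y => ?_
          rw [hI y, iSup_rpow_aux _ hs0]
      _ = ⨆ n, ∫⁻ y, In n y ^ s ∂ν :=
          lintegral_iSup (fun n => (hInmeas n).pow_const s)
            (fun n m h y => ENNReal.rpow_le_rpow (hInmono h y) hs0.le)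
  have hAn_top : ∀ n, (∫⁻ y, In n y ^ s ∂ν) ≠ ⊤ := by
    intro n
    set C : ℝ≥0∞ := n * μ (spanningSets μ n) with hC
    have hCt : C ≠ ⊤ :=
      ENNReal.mul_ne_top (ENNReal.natCast_ne_top n) (measure_spanningSets_lt_top μ n).ne
    have hbound : ∀ y, In n y ^ s ≤ (spanningSets ν n).indicator (fun _ => C ^ s) y := by
      intro y
      classical
      by_cases hy : y ∈ spanningSets ν n
      · rw [Set.indicator_of_mem hy]
        refine ENNReal.rpow_le_rpow ?_ hs0.le
        calc In n y ≤ ∫⁻ x, (spanningSets μ n).indicator (fun _ => (n:ℝ≥0∞)) x ∂μ := by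
              refine lintegral_mono fun x => ?_
              calc T n x y ≤ (spanningSets μ n).indicator (fun _ => 1) x * (1 * n) :=
                    mul_le_mul' le_rfl (mul_le_mul' (indicator_one_le _ y) (min_le_right _ _))
                _ = (spanningSets μ n).indicator (fun _ => (n:ℝ≥0∞)) x := by
                    by_cases hx : x ∈ spanningSets μ n <;> simp [hx]
          _ = C := by
              rw [lintegral_indicator_const (measurableSet_spanningSets μ n), hC]
      · rw [Set.indicator_of_notMem hy]
        have h0 : In n y = 0 := by
          have hz : ∀ x, T n x y = 0 := fun x => by
            rw [hTdef]; simp [Set.indicator_of_notMem hy]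
          calc In n y = ∫⁻ x, (0:ℝ≥0∞) ∂μ := lintegral_congr fun x => hz x
            _ = 0 := lintegral_zero
        rw [h0, ENNReal.zero_rpow_of_pos hs0]
    have hle : (∫⁻ y, In n y ^ s ∂ν) ≤ C ^ s * ν (spanningSets ν n) := by
      refine le_trans (lintegral_mono hbound) ?_
      rw [lintegral_indicator_const (measurableSet_spanningSets ν n)]
    refine (lt_of_le_of_lt hle ?_).ne
    exact ENNReal.mul_lt_top
      (ENNReal.rpow_lt_top_of_nonneg hs0.le hCt) (measure_spanningSets_lt_top ν n)
  rw [hA, iSup_rpow_aux _ (by positivity : (0:ℝ) < 1/s)]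
  refine iSup_le fun n => ?_
  refine le_trans (le_trans (le_of_eq ?_) (minkowski_fin μ ν hs (T n) (hTmeas n) (hAn_top n))) ?_
  · rfl
  · refine lintegral_mono fun x => ENNReal.rpow_le_rpow
      (lintegral_mono fun y => ENNReal.rpow_le_rpow (hTle n x y) hs0.le) (by positivity)

end trunc


/-- The mixed norm `‖f‖_{L^p(μ; L^q(ν))}` of `f : α → β → ℝ`:
`(∫_α (∫_β |f x y|^q dν)^{p/q} dμ)^{1/p}`. -/
noncomputable def mixedNorm {α β : Type*} [MeasurableSpace α] [MeasurableSpace β]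
    (μ : Measure α) (ν : Measure β) (p q : ℝ) (f : α → β → ℝ) : ENNReal :=
  (∫⁻ x, (∫⁻ y, ENNReal.ofReal |f x y| ^ q ∂ν) ^ (p / q) ∂μ) ^ (1 / p)

/-- Minkowski's integral inequality for mixed norms: if `1 ≤ p ≤ p'`
and `f ∈ L^p(X₁; L^{p'}(X₂))`, then `f ∈ L^{p'}(X₂; L^p(X₁))` with
`‖f‖_{L^{p'}(X₂; L^p(X₁))} ≤ ‖f‖_{L^p(X₁; L^{p'}(X₂))}`. -/
theorem minkowski_mixed_norm {α β : Type*} [MeasurableSpace α] [MeasurableSpace β]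
    (μ : Measure α) (ν : Measure β) [SigmaFinite μ] [SigmaFinite ν]
    (p p' : ℝ) (hp : 1 ≤ p) (hpp' : p ≤ p')
    (f : α → β → ℝ) (hf : Measurable (Function.uncurry f))
    (hmem : mixedNorm μ ν p p' f < ⊤) :
    mixedNorm ν μ p' p (fun y x => f x y) < ⊤ ∧
      mixedNorm ν μ p' p (fun y x => f x y) ≤ mixedNorm μ ν p p' f := by
  have hp0 : (0:ℝ) < p := lt_of_lt_of_le one_pos hp
  have hp'0 : (0:ℝ) < p' := lt_of_lt_of_le one_pos (hp.trans hpp')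
  set s : ℝ := p' / p with hsdef
  have hs1 : 1 ≤ s := (one_le_div hp0).mpr hpp'
  set g : α → β → ℝ≥0∞ := fun x y => ENNReal.ofReal |f x y| ^ p with hgdef
  have hgmeas : Measurable (uncurry g) := (hf.abs.ennreal_ofReal).pow_const p
  have key := minkowski_int μ ν hs1 g hgmeas
  have e1 : mixedNorm ν μ p' p (fun y x => f x y)
      = ((∫⁻ y, (∫⁻ x, g x y ∂μ) ^ s ∂ν) ^ (1/s)) ^ (1/p) := by
    rw [mixedNorm, ← ENNReal.rpow_mul]
    congr 1
    rw [hsdef]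
    field_simp
  have e2 : mixedNorm μ ν p p' f
      = (∫⁻ x, (∫⁻ y, g x y ^ s ∂ν) ^ (1/s) ∂μ) ^ (1/p) := by
    rw [mixedNorm]
    congr 1
    refine lintegral_congr fun x => ?_
    congr 1
    · refine lintegral_congr fun y => ?_
      rw [hgdef]
      dsimp only
      rw [← ENNReal.rpow_mul]
      congr 1
      rw [hsdef]
      field_simp
    · rw [hsdef]
      field_simp
  have hle : mixedNorm ν μ p' p (fun y x => f x y) ≤ mixedNorm μ ν p p' f := by
    rw [e1, e2]
    exact ENNReal.rpow_le_rpow key (by positivity)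
  exact ⟨lt_of_le_of_lt hle hmem, hle⟩
end
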